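/- Fix n ≥ 2. A problem f : (ℕ→ℕ) → Set (Fin n) is discontinuous if and only if ACC_{Fin n} ≤_W* f. -/

import Mathlib

/-- The domain of a problem with codomain `Fin n`. -/
def domF {n : ℕ} (f : (ℕ → ℕ) → Set (Fin n)) : Set (ℕ → ℕ) := {p | f p ≠ ∅}

/-- The problem `ACC_{Fin n}`. -/
def ACCF (n : ℕ) (p : ℕ → ℕ) : Set (Fin n) :=
  {m | ((∀ i j, p i ≠ 0 → p j ≠ 0 → p i = p j) ∧ ∀ k, p k ≤ n) ∧
    ∀ k, p k ≠ (m : ℕ) + 1}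

/-- Continuity of a problem with codomain `Fin n`. -/
def FinContinuous {n : ℕ} (f : (ℕ → ℕ) → Set (Fin n)) : Prop :=
  ∃ F : (ℕ → ℕ) → Fin n, ContinuousOn F (domF f) ∧ ∀ p ∈ domF f, F p ∈ f p

/-- Continuous Weihrauch reducibility between problems with codomain `Fin n`. -/
def RedFin {n : ℕ} (f g : (ℕ → ℕ) → Set (Fin n)) : Prop :=
  ∃ (H : (ℕ → ℕ) → (ℕ → ℕ)) (K : (ℕ → ℕ) × Fin n → Fin n),
    ContinuousOn H (domF f) ∧
    ContinuousOn K {pm : (ℕ → ℕ) × Fin n | pm.1 ∈ domF f ∧ pm.2 ∈ g (H pm.1)} ∧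
    (∀ p ∈ domF f, H p ∈ domF g) ∧
    (∀ p ∈ domF f, ∀ m ∈ g (H p), K (p, m) ∈ f p)

/- ### Auxiliary lemmas -/

lemma cyl_isOpen (x : ℕ → ℕ) (j : ℕ) : IsOpen {y : ℕ → ℕ | ∀ i < j, y i = x i} := by
  have h : {y : ℕ → ℕ | ∀ i < j, y i = x i}
      = ⋂ i ∈ Finset.range j, {y : ℕ → ℕ | y i = x i} := by
    ext y; simp [Finset.mem_range]
  rw [h]
  refine isOpen_biInter_finset fun i _ => ?_
  show IsOpen ((fun y : ℕ → ℕ => y i) ⁻¹' {x i})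
  exact (continuous_apply i).isOpen_preimage _ (isOpen_discrete _)

lemma cwa_const {β : Type*} [TopologicalSpace β] {F : (ℕ → ℕ) → β} {S : Set (ℕ → ℕ)}
    {x : ℕ → ℕ} {U : Set (ℕ → ℕ)} (hU : IsOpen U) (hx : x ∈ U)
    (hconst : ∀ y ∈ U, y ∈ S → F y = F x) : ContinuousWithinAt F S x := by
  have h1 : ∀ᶠ y in nhdsWithin x S, F y = F x := by
    filter_upwards [nhdsWithin_le_nhds (hU.mem_nhds hx), self_mem_nhdsWithin] with y h1 h2
    exact hconst y h1 h2
  have h2 : Filter.Tendsto (fun _ : ℕ → ℕ => F x) (nhdsWithin x S) (nhds (F x)) :=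
    tendsto_const_nhds
  exact h2.congr' (by filter_upwards [h1] with y hy using hy.symm)

lemma mem_domACC {n : ℕ} (hn : 2 ≤ n) (p : ℕ → ℕ) :
    p ∈ domF (ACCF n) ↔ ((∀ i j, p i ≠ 0 → p j ≠ 0 → p i = p j) ∧ ∀ k, p k ≤ n) := by
  constructor
  · intro hp
    obtain ⟨m, hm⟩ := Set.nonempty_iff_ne_empty.mpr hp
    exact hm.1
  · intro hD
    refine Set.nonempty_iff_ne_empty.mp ?_
    by_cases h0 : ∀ k, p k = 0
    · refine ⟨⟨0, by omega⟩, hD, fun k => ?_⟩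
      rw [h0 k]; simp
    · push_neg at h0
      obtain ⟨k0, hk0⟩ := h0
      refine ⟨if h1 : p k0 = 1 then ⟨1, by omega⟩ else ⟨0, by omega⟩, hD, ?_⟩
      intro k hk
      by_cases hz : p k = 0
      · split_ifs at hk <;> simp_all
      · have heq : p k = p k0 := hD.1 k k0 hz hk0
        split_ifs at hk with h1 <;> simp at hk <;> omega

lemma caseA {n : ℕ} (hn : 2 ≤ n) (f : (ℕ → ℕ) → Set (Fin n))
    (hA : ∀ x ∈ domF f, ∃ j, ∃ m : Fin n, ∀ z ∈ domF f, (∀ i < j, z i = x i) → m ∈ f z) :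
    FinContinuous f := by
  classical
  have hP : ∀ x, x ∈ domF f → ∃ j, ∃ m : ℕ, ∃ hm : m < n,
      ∀ z ∈ domF f, (∀ i < j, z i = x i) → (⟨m, hm⟩ : Fin n) ∈ f z := by
    intro x hx
    obtain ⟨j, ⟨mv, hmv⟩, hm⟩ := hA x hx
    exact ⟨j, mv, hmv, hm⟩
  have hPm : ∀ x (hx : x ∈ domF f), ∃ m : ℕ, ∃ hm : m < n,
      ∀ z ∈ domF f, (∀ i < Nat.find (hP x hx), z i = x i) → (⟨m, hm⟩ : Fin n) ∈ f z :=
    fun x hx => Nat.find_spec (hP x hx)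
  have key : ∀ x (hx : x ∈ domF f) y (hy : y ∈ domF f),
      (∀ i < Nat.find (hP x hx), y i = x i) →
      Nat.find (hPm y hy) = Nat.find (hPm x hx) := by
    intro x hx y hy hagree
    have hj : Nat.find (hP y hy) = Nat.find (hP x hx) := by
      apply le_antisymm
      · apply Nat.find_le
        obtain ⟨m, hm, hall⟩ := Nat.find_spec (hP x hx)
        refine ⟨m, hm, fun z hz hzag => hall z hz fun i hi => ?_⟩
        exact (hzag i hi).trans (hagree i hi)
      · by_contra hl
        push_neg at hl
        obtain ⟨m, hm, hall⟩ := Nat.find_spec (hP y hy)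
        refine Nat.find_min (hP x hx) hl ⟨m, hm, fun z hz hzag => hall z hz fun i hi => ?_⟩
        exact (hzag i hi).trans (hagree i (lt_trans hi hl)).symm
    apply le_antisymm
    · apply Nat.find_mono
      rintro m ⟨hm, hall⟩
      refine ⟨hm, fun z hz hzag => hall z hz fun i hi => ?_⟩
      exact (hzag i (by omega)).trans (hagree i hi)
    · apply Nat.find_mono
      rintro m ⟨hm, hall⟩
      refine ⟨hm, fun z hz hzag => hall z hz fun i hi => ?_⟩
      exact (hzag i (by omega)).trans (hagree i (by omega)).symm
  refine ⟨fun x => if hx : x ∈ domF f then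
      ⟨Nat.find (hPm x hx), (Nat.find_spec (hPm x hx)).choose⟩ else ⟨0, by omega⟩, ?_, ?_⟩
  · intro x hx
    apply cwa_const (cyl_isOpen x (Nat.find (hP x hx))) (fun i _ => rfl)
    intro y hyU hyD
    have hm := key x hx y hyD hyU
    simp only [dif_pos hyD, dif_pos hx, Fin.mk.injEq]
    exact hm
  · intro x hx
    simp only [dif_pos hx]
    exact (Nat.find_spec (hPm x hx)).choose_spec x hx (fun i _ => rfl)

lemma accf_not_cont (n : ℕ) (hn : 2 ≤ n) : ¬ FinContinuous (ACCF n) := by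
  classical
  rintro ⟨G, hGc, hGs⟩
  set z : ℕ → ℕ := fun _ => 0 with hz
  have hzD : z ∈ domF (ACCF n) := by
    rw [mem_domACC hn]
    exact ⟨fun i j hi _ => absurd rfl hi, fun k => by simp [hz]⟩
  set m0 := G z with hm0
  set q : ℕ → ℕ → ℕ := fun j k => if k < j then 0 else (m0 : ℕ) + 1 with hq
  have hqD : ∀ j, q j ∈ domF (ACCF n) := by
    intro j
    rw [mem_domACC hn]
    constructor
    · intro i k hi hk
      simp only [hq] at hi hk ⊢
      split_ifs at hi hk ⊢ <;> simp_all
    · intro k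
      simp only [hq]
      split_ifs
      · omega
      · have := m0.isLt; omega
  have htend : Filter.Tendsto q Filter.atTop (nhdsWithin z (domF (ACCF n))) := by
    rw [tendsto_nhdsWithin_iff]
    constructor
    · rw [tendsto_pi_nhds]
      intro k
      have hev : ∀ᶠ j in Filter.atTop, q j k = z k :=
        Filter.eventually_atTop.mpr ⟨k + 1, fun j hj => by simp only [hq, hz]; rw [if_pos (by omega)]⟩
      exact Filter.Tendsto.congr' (by filter_upwards [hev] with j h using h.symm) tendsto_const_nhds
    · exact Filter.Eventually.of_forall hqD
  have h2 : Filter.Tendsto (fun j => G (q j)) Filter.atTop (nhds m0) :=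
    (hGc z hzD).tendsto.comp htend
  have h3 : ∀ᶠ j in Filter.atTop, G (q j) ∈ ({m0} : Set (Fin n)) :=
    h2.eventually_mem ((isOpen_discrete _).mem_nhds rfl)
  obtain ⟨j, hj⟩ := h3.exists
  have hj' : G (q j) = m0 := hj
  have hsel := hGs (q j) (hqD j)
  have hne := hsel.2 j
  apply hne
  rw [hj']
  simp only [hq]
  rw [if_neg (by omega)]

lemma red_cont {n : ℕ} {g f : (ℕ → ℕ) → Set (Fin n)} (h : RedFin g f)
    (hf : FinContinuous f) : FinContinuous g := by
  obtain ⟨H, K, hHc, hKc, hdom, hsel⟩ := h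
  obtain ⟨F, hFc, hFs⟩ := hf
  refine ⟨fun p => K (p, F (H p)), ?_, ?_⟩
  · have h1 : ContinuousOn (fun p => F (H p)) (domF g) := hFc.comp hHc hdom
    have h2 : ContinuousOn (fun p => ((p, F (H p)) : (ℕ → ℕ) × Fin n)) (domF g) :=
      continuousOn_id.prodMk h1
    exact hKc.comp h2 fun p hp => ⟨hp, hFs (H p) (hdom p hp)⟩
  · intro p hp
    exact hsel p hp (F (H p)) (hFs (H p) (hdom p hp))

theorem fin_discontinuous_iff_accf (n : ℕ) (hn : 2 ≤ n)
    (f : (ℕ → ℕ) → Set (Fin n)) :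
    ¬ FinContinuous f ↔ RedFin (ACCF n) f := by
  classical
  constructor
  · intro hnc
    have hAneg : ¬ (∀ x ∈ domF f, ∃ j, ∃ m : Fin n,
        ∀ z ∈ domF f, (∀ i < j, z i = x i) → m ∈ f z) :=
      fun hA => hnc (caseA hn f hA)
    push_neg at hAneg
    obtain ⟨x, hx, hB⟩ := hAneg
    choose Y hY1 hY2 hY3 using hB
    set H : (ℕ → ℕ) → (ℕ → ℕ) := fun p =>
      if h : ∃ k, p k ≠ 0 then
        Y (Nat.find h) ⟨(p (Nat.find h) - 1) % n, Nat.mod_lt _ (by omega)⟩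
      else x with hH
    have hHz : ∀ p, (∀ k, p k = 0) → H p = x := by
      intro p hp
      apply dif_neg
      push_neg
      exact hp
    have hHnz : ∀ p (h : ∃ k, p k ≠ 0),
        H p = Y (Nat.find h) ⟨(p (Nat.find h) - 1) % n, Nat.mod_lt _ (by omega)⟩ :=
      fun p h => dif_pos h
    have hdomH : ∀ p ∈ domF (ACCF n), H p ∈ domF f := by
      intro p _
      by_cases h : ∃ k, p k ≠ 0
      · rw [hHnz p h]; exact hY1 _ _
      · push_neg at h; rw [hHz p h]; exact hx
    refine ⟨H, fun pm => pm.2, ?_, continuous_snd.continuousOn, hdomH, ?_⟩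
    · intro p hp
      by_cases h : ∃ k, p k ≠ 0
      · apply cwa_const (cyl_isOpen p (Nat.find h + 1)) (fun i _ => rfl)
        intro q hqU hqD
        have hq : ∃ k, q k ≠ 0 :=
          ⟨Nat.find h, by rw [hqU (Nat.find h) (by omega)]; exact Nat.find_spec h⟩
        have hfind : Nat.find hq = Nat.find h := by
          apply le_antisymm
          · exact Nat.find_le (by rw [hqU _ (by omega)]; exact Nat.find_spec h)
          · by_contra hl
            push_neg at hl
            exact Nat.find_min h hl (by rw [← hqU _ (by omega)]; exact Nat.find_spec hq)
        rw [hHnz q hq, hHnz p h, hfind, hqU (Nat.find h) (by omega)]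
      · push_neg at h
        have hHp : H p = x := hHz p h
        have hT : Filter.Tendsto H (nhdsWithin p (domF (ACCF n))) (nhds x) := by
          rw [tendsto_pi_nhds]
          intro i
          have hev : ∀ᶠ w in nhdsWithin p (domF (ACCF n)), H w i = x i := by
            filter_upwards [nhdsWithin_le_nhds
              ((cyl_isOpen p (i + 1)).mem_nhds (fun t _ => rfl)), self_mem_nhdsWithin]
              with w hwU hwD
            by_cases hw : ∃ k, w k ≠ 0
            · have hbig : i < Nat.find hw := by
                by_contra hle
                push_neg at hle
                exact Nat.find_spec hw (by rw [hwU _ (by omega)]; exact h _)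
              rw [hHnz w hw]
              exact hY2 _ _ i hbig
            · push_neg at hw; rw [hHz w hw]
          exact Filter.Tendsto.congr'
            (by filter_upwards [hev] with w hw using hw.symm) tendsto_const_nhds
        rw [← hHp] at hT
        exact hT
    · intro p hp m hm
      have hD := (mem_domACC hn p).mp hp
      refine ⟨hD, fun k hk => ?_⟩
      have hne : p k ≠ 0 := by rw [hk]; omega
      have h : ∃ k, p k ≠ 0 := ⟨k, hne⟩
      have hv : p (Nat.find h) = (m : ℕ) + 1 := by
        rw [hD.1 (Nat.find h) k (Nat.find_spec h) hne, hk]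
      have hcol : (⟨(p (Nat.find h) - 1) % n, Nat.mod_lt _ (by omega)⟩ : Fin n) = m := by
        apply Fin.ext
        simp only [hv]
        simp [Nat.mod_eq_of_lt m.isLt]
      rw [hHnz p h, hcol] at hm
      exact hY3 _ _ hm
  · intro hred hc
    exact accf_not_cont n hn (red_cont hred hc)
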